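/- There is no expansive cellular automaton over the Feldman space on the binary alphabet: for every cellular automaton F over {0,1}^ℕ and every ε > 0, there exist x, y ∈ {0,1}^ℕ with 𝔡_L(x,y) > 0 such that 𝔡_L(F^t(x), F^t(y)) ≤ ε for every t ∈ ℕ. -/

import Mathlib

open Filter

/-- The finite factor `x_[i, i+n)` of the infinite word `x`. -/
def factor {A : Type*} (x : ℕ → A) (i n : ℕ) : List A := List.ofFn (fun k : Fin n => x (i + k))

/-- The shift map `σ` on infinite words. -/
def shift {A : Type*} (x : ℕ → A) : ℕ → A := fun i => x (i + 1)
/-- The maximal length of a common (not necessarily contiguous) subsequence of `u` and `v`. -/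
noncomputable def lcs {A : Type*} (u v : List A) : ℕ :=
  sSup {n | ∃ w : List A, w.length = n ∧ w.Sublist u ∧ w.Sublist v}

/-- The (halved) Levenshtein distance `d_L(u,v) = (|u|+|v|)/2 - ℓ(u,v)`. -/
noncomputable def levD {A : Type*} (u v : List A) : ℝ :=
  ((u.length : ℝ) + v.length) / 2 - lcs u v

/-- The Feldman pseudometric `𝔡_L`. -/
noncomputable def feld {A : Type*} (x y : ℕ → A) : ℝ :=
  limsup (fun l : ℕ => levD (factor x 0 l) (factor y 0 l) / l) atTop

lemma lcs_set_nonempty {A : Type*} (u v : List A) :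
    Set.Nonempty {n | ∃ w : List A, w.length = n ∧ w.Sublist u ∧ w.Sublist v} :=
  ⟨0, [], rfl, List.nil_sublist u, List.nil_sublist v⟩

lemma lcs_set_bdd {A : Type*} (u v : List A) :
    BddAbove {n | ∃ w : List A, w.length = n ∧ w.Sublist u ∧ w.Sublist v} :=
  ⟨u.length, fun n ⟨w, hl, h1, _⟩ => hl ▸ h1.length_le⟩

lemma lcs_le {A : Type*} {u v : List A} {m : ℕ}
    (h : ∀ w : List A, w.Sublist u → w.Sublist v → w.length ≤ m) : lcs u v ≤ m :=
  csSup_le (lcs_set_nonempty u v) (fun n ⟨w, hl, h1, h2⟩ => hl ▸ h w h1 h2)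

lemma le_lcs {A : Type*} {u v : List A} (w : List A) (h1 : w.Sublist u) (h2 : w.Sublist v) :
    w.length ≤ lcs u v :=
  le_csSup (lcs_set_bdd u v) ⟨w, rfl, h1, h2⟩

lemma lcs_le_left {A : Type*} (u v : List A) : lcs u v ≤ u.length :=
  lcs_le fun _ h1 _ => h1.length_le

lemma length_factor {A : Type*} (x : ℕ → A) (l : ℕ) : (factor x 0 l).length = l := by
  simp [factor]

lemma factor_eq_map {A : Type*} (x : ℕ → A) (l : ℕ) :
    factor x 0 l = (List.range l).map x := by
  apply List.ext_getElem (by simp [factor])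
  intro i h1 h2
  simp [factor]

lemma levD_factor_eq {A : Type*} (x y : ℕ → A) (l : ℕ) :
    levD (factor x 0 l) (factor y 0 l) = (l : ℝ) - lcs (factor x 0 l) (factor y 0 l) := by
  rw [levD, length_factor, length_factor]; ring

lemma levD_factor_nonneg {A : Type*} (x y : ℕ → A) (l : ℕ) :
    0 ≤ levD (factor x 0 l) (factor y 0 l) := by
  rw [levD_factor_eq]
  have := lcs_le_left (factor x 0 l) (factor y 0 l)
  rw [length_factor] at this
  have : (lcs (factor x 0 l) (factor y 0 l) : ℝ) ≤ l := by exact_mod_cast this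
  linarith

lemma levD_factor_le {A : Type*} (x y : ℕ → A) (l : ℕ) :
    levD (factor x 0 l) (factor y 0 l) ≤ l := by
  rw [levD_factor_eq]
  have : (0:ℝ) ≤ lcs (factor x 0 l) (factor y 0 l) := by positivity
  linarith

lemma levD_div_nonneg {A : Type*} (x y : ℕ → A) (l : ℕ) :
    0 ≤ levD (factor x 0 l) (factor y 0 l) / l :=
  div_nonneg (levD_factor_nonneg x y l) (by positivity)

lemma levD_div_le_one {A : Type*} (x y : ℕ → A) (l : ℕ) :
    levD (factor x 0 l) (factor y 0 l) / l ≤ 1 := by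
  rcases Nat.eq_zero_or_pos l with h | h
  · subst h; simp
  · rw [div_le_one (by exact_mod_cast h)]
    exact levD_factor_le x y l

lemma countP_range_eq_card (p : ℕ → Bool) (n : ℕ) :
    (List.range n).countP p = ((Finset.range n).filter (fun i => p i = true)).card := by
  induction n with
  | zero => simp
  | succ n ih => rw [List.range_succ, Finset.range_add_one]; by_cases h : p n <;>
      simp [List.countP_append, Finset.filter_insert, h, Finset.card_insert_of_notMem, ih,
        List.countP_cons]

lemma levD_le_hamming (x y : ℕ → Bool) (l : ℕ) :
    levD (factor x 0 l) (factor y 0 l)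
      ≤ ((Finset.range l).filter (fun i => x i ≠ y i)).card := by
  set w : List Bool := ((List.range l).filter (fun i => x i == y i)).map x with hw
  have hwx : w.Sublist (factor x 0 l) := by
    rw [factor_eq_map]
    exact (List.filter_sublist).map x
  have hwy : w.Sublist (factor y 0 l) := by
    have : w = ((List.range l).filter (fun i => x i == y i)).map y := by
      rw [hw]
      apply List.map_congr_left
      intro a ha
      have hb := List.of_mem_filter ha
      exact eq_of_beq hb
    rw [this, factor_eq_map]
    exact (List.filter_sublist).map y
  have hlen : w.length = ((Finset.range l).filter (fun i => x i = y i)).card := by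
    rw [hw, List.length_map, ← List.countP_eq_length_filter, countP_range_eq_card]
    apply congrArg
    apply Finset.filter_congr
    intro i _
    simp
  have hle : ((Finset.range l).filter (fun i => x i = y i)).card
      ≤ lcs (factor x 0 l) (factor y 0 l) := hlen ▸ le_lcs w hwx hwy
  have hsplit : ((Finset.range l).filter (fun i => x i = y i)).card
      + ((Finset.range l).filter (fun i => x i ≠ y i)).card = l := by
    rw [Finset.card_filter_add_card_filter_not (fun i => x i = y i), Finset.card_range]
  rw [levD_factor_eq]
  have h1 : (((Finset.range l).filter (fun i => x i = y i)).card : ℝ)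
      ≤ lcs (factor x 0 l) (factor y 0 l) := by exact_mod_cast hle
  have h2 : (((Finset.range l).filter (fun i => x i = y i)).card : ℝ)
      + ((Finset.range l).filter (fun i => x i ≠ y i)).card = l := by exact_mod_cast hsplit
  linarith

lemma ones_le_levD (y : ℕ → Bool) (l : ℕ) :
    ((((Finset.range l).filter (fun i => y i = true)).card : ℝ))
      ≤ levD (factor (fun _ => false) 0 l) (factor y 0 l) := by
  have hrep : factor (fun _ : ℕ => false) 0 l = List.replicate l false := by
    rw [factor_eq_map]
    simpa using List.map_const (List.range l) false
  have hcount : (factor y 0 l).count false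
      = ((Finset.range l).filter (fun i => y i = false)).card := by
    rw [factor_eq_map, List.count_eq_countP, List.countP_map]
    have h0 : ((fun x => x == false) ∘ y) = fun i => y i == false := rfl
    rw [h0, countP_range_eq_card]
    apply congrArg
    apply Finset.filter_congr
    intro i _
    simp
  have hlcs : lcs (factor (fun _ : ℕ => false) 0 l) (factor y 0 l)
      ≤ ((Finset.range l).filter (fun i => y i = false)).card := by
    rw [← hcount]
    apply lcs_le
    intro w h1 h2
    rw [hrep] at h1
    obtain ⟨k, hk, rfl⟩ := List.sublist_replicate_iff.1 h1
    have := h2.count_le false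
    simpa using this
  have hsplit : ((Finset.range l).filter (fun i => y i = true)).card
      + ((Finset.range l).filter (fun i => y i = false)).card = l := by
    have h := Finset.card_filter_add_card_filter_not (s := Finset.range l)
      (fun i => y i = true)
    rw [Finset.card_range] at h
    have hco : (Finset.range l).filter (fun a => ¬ y a = true)
        = (Finset.range l).filter (fun i => y i = false) := by
      apply Finset.filter_congr
      intro i _
      simp
    rw [hco] at h
    exact h
  rw [levD_factor_eq]
  have h1 : (lcs (factor (fun _ : ℕ => false) 0 l) (factor y 0 l) : ℝ)
      ≤ ((Finset.range l).filter (fun i => y i = false)).card := by exact_mod_cast hlcs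
  have h2 : (((Finset.range l).filter (fun i => y i = true)).card : ℝ)
      + ((Finset.range l).filter (fun i => y i = false)).card = l := by exact_mod_cast hsplit
  linarith

lemma ca_local (F : (ℕ → Bool) → ℕ → Bool) (s : ℕ) (f : (Fin s → Bool) → Bool)
    (hf : ∀ x i, F x i = f (fun k => x (i + k))) :
    ∀ (t : ℕ) (x y : ℕ → Bool) (i : ℕ),
      (∀ j ≤ t * (s - 1), x (i + j) = y (i + j)) → F^[t] x i = F^[t] y i := by
  intro t
  induction t with
  | zero => intro x y i h; simpa using h 0 (by omega)
  | succ t ih =>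
    intro x y i h
    rw [Function.iterate_succ_apply, Function.iterate_succ_apply]
    apply ih
    intro j hj
    rw [hf, hf]
    congr 1
    funext k
    have hks : (k : ℕ) < s := k.isLt
    have hj' : j + (k : ℕ) ≤ (t + 1) * (s - 1) := by
      have hmul : (t + 1) * (s - 1) = t * (s - 1) + (s - 1) := by ring
      omega
    have := h (j + (k : ℕ)) hj'
    simpa [add_assoc] using this

lemma geom_sum_le (m : ℕ) : ∑ n ∈ Finset.range m, 4 ^ n ≤ 4 ^ m := by
  induction m with
  | zero => simp
  | succ m ih =>
    rw [Finset.sum_range_succ]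
    have : 4 ^ (m + 1) = 4 * 4 ^ m := by ring
    omega

lemma sub_card_helper (a b r : ℕ) : a + b - (a - r) ≤ b + r := by omega

lemma bound1 (ε : ℝ) (hε : 0 < ε) (M l r : ℕ) (hM16 : 16/ε ≤ M) (hM0 : (0:ℝ) < M)
    (hl0 : (0:ℝ) < l) (hrl : (r:ℝ) ≤ l) :
    (↑(4 * ((l + r)/M)) : ℝ) / l ≤ ε/2 := by
  have key : (16:ℝ) ≤ ε * M := by
    rw [div_le_iff₀ hε] at hM16
    linarith
  have hc : (↑(4 * ((l + r)/M)) : ℝ) ≤ 4 * (((l:ℝ) + r)/M) := by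
    push_cast
    have hdl := Nat.cast_div_le (α := ℝ) (m := l + r) (n := M)
    push_cast at hdl
    linarith
  rw [div_le_iff₀ hl0]
  have e1 : ((l:ℝ)+r)/M ≤ 2*l/M := by gcongr; linarith
  have e2 : (8:ℝ)/M ≤ ε/2 := by rw [div_le_iff₀ hM0]; nlinarith
  have e3 : 4*(2*(l:ℝ)/M) = (8/M)*l := by ring
  have e4 : (8/M)*(l:ℝ) ≤ (ε/2)*l := mul_le_mul_of_nonneg_right e2 hl0.le
  nlinarith

lemma bound2 (ε : ℝ) (hε : 0 < ε) (l r : ℕ) (hl0 : (0:ℝ) < l) (hrl : (r:ℝ) ≤ l)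
    (hlε : (4*(r:ℝ)/ε)^2 ≤ l) :
    (↑(Nat.sqrt (l + r) * r) : ℝ) / l ≤ ε/2 := by
  have hr0 : (0:ℝ) ≤ r := by positivity
  have hs1 : (Nat.sqrt (l+r) : ℝ) ≤ Real.sqrt ((l:ℝ)+r) := by
    rw [Real.le_sqrt (by positivity) (by positivity)]
    have h := Nat.sqrt_le (l + r)
    have h' : ((Nat.sqrt (l+r) : ℝ)) * (Nat.sqrt (l+r)) ≤ (l:ℝ) + r := by
      exact_mod_cast h
    nlinarith
  have hs2 : Real.sqrt ((l:ℝ)+r) ≤ 2 * Real.sqrt l := by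
    have hle : ((l:ℝ)+r) ≤ (2:ℝ)^2 * l := by nlinarith
    calc Real.sqrt ((l:ℝ)+r) ≤ Real.sqrt ((2:ℝ)^2 * l) := Real.sqrt_le_sqrt hle
    _ = 2 * Real.sqrt l := by
        rw [Real.sqrt_mul (by positivity), Real.sqrt_sq (by norm_num)]
  have hs3 : 4*(r:ℝ)/ε ≤ Real.sqrt l := by
    rw [Real.le_sqrt (by positivity) (by positivity)]
    exact hlε
  have hs4 : 2*(r:ℝ) ≤ ε/2 * Real.sqrt l := by
    rw [div_le_iff₀ hε] at hs3
    nlinarith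
  have hll : Real.sqrt l * Real.sqrt l = (l:ℝ) := Real.mul_self_sqrt hl0.le
  rw [div_le_iff₀ hl0]
  push_cast
  have A1 : (Nat.sqrt (l+r):ℝ) * r ≤ (2 * Real.sqrt l) * r :=
    mul_le_mul_of_nonneg_right (hs1.trans hs2) hr0
  have A3 : Real.sqrt l * (2*(r:ℝ)) ≤ Real.sqrt l * (ε/2 * Real.sqrt l) :=
    mul_le_mul_of_nonneg_left hs4 (Real.sqrt_nonneg _)
  nlinarith

/-- There is no expansive cellular automaton on the Feldman space over the binary
alphabet: for every CA `F` and every `ε > 0` there are `x, y` with `𝔡_L(x,y) > 0` but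
`𝔡_L(F^t(x), F^t(y)) ≤ ε` for all `t`. -/
theorem no_expansive_ca_feldman (F : (ℕ → Bool) → ℕ → Bool)
    (hCA : ∃ (s : ℕ) (f : (Fin s → Bool) → Bool), 1 ≤ s ∧
      ∀ (x : ℕ → Bool) (i : ℕ), F x i = f (fun k => x (i + k)))
    (ε : ℝ) (hε : 0 < ε) :
    ∃ x y : ℕ → Bool, 0 < feld x y ∧ ∀ t : ℕ, feld (F^[t] x) (F^[t] y) ≤ ε := by
  classical
  obtain ⟨s, f, hs, hf⟩ := hCA
  set M : ℕ := ⌈(16:ℝ)/ε⌉₊ + 1 with hMdef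
  have hM1 : 1 ≤ M := Nat.le_add_left 1 _
  have hM0 : (0:ℝ) < M := by exact_mod_cast hM1
  have hM16 : (16:ℝ)/ε ≤ M := by
    calc (16:ℝ)/ε ≤ ⌈(16:ℝ)/ε⌉₊ := Nat.le_ceil _
    _ ≤ M := by exact_mod_cast Nat.le_succ _
  have key : (16:ℝ) ≤ ε * M := by
    rw [div_le_iff₀ hε] at hM16
    linarith
  set P : ℕ → Prop := fun i => ∃ n : ℕ, M * 4 ^ n ≤ i ∧ i < M * 4 ^ n + 4 ^ n with hP
  set y : ℕ → Bool := fun i => if P i then true else false with hy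
  have hyP : ∀ i, y i = true ↔ P i := by
    intro i; rw [hy]; by_cases h : P i <;> simp [h]
  refine ⟨fun _ => false, y, ?_, ?_⟩
  · -- positivity of feld
    have hfeld : 1/((M:ℝ)+1) ≤ feld (fun _ => false) y := by
      apply Filter.le_limsup_of_frequently_le
      · rw [Filter.frequently_atTop]
        intro N
        refine ⟨(M+1) * 4^N, ?_, ?_⟩
        · calc N ≤ 4^N := (Nat.lt_pow_self (n := N) (by norm_num)).le
          _ ≤ (M+1)*4^N := Nat.le_mul_of_pos_left _ (by omega)
        · set l := (M+1)*4^N with hl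
          have hsub : Finset.Ico (M*4^N) (M*4^N + 4^N) ⊆
              (Finset.range l).filter (fun i => y i = true) := by
            intro i hi
            rw [Finset.mem_Ico] at hi
            rw [Finset.mem_filter, Finset.mem_range]
            refine ⟨?_, (hyP i).2 ⟨N, hi.1, hi.2⟩⟩
            have hadd : M*4^N + 4^N = l := by rw [hl]; ring
            omega
          have hcard : 4^N ≤ ((Finset.range l).filter (fun i => y i = true)).card := by
            have h := Finset.card_le_card hsub
            rwa [Nat.card_Ico, Nat.add_sub_cancel_left] at h
          have hones := ones_le_levD y l
          have hl0 : (0:ℝ) < l := by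
            have : 0 < l := by positivity
            exact_mod_cast this
          rw [le_div_iff₀ hl0]
          have hlc : (l:ℝ) = ((M:ℝ)+1) * 4^N := by rw [hl]; push_cast; ring
          have h1 : 1/((M:ℝ)+1) * l = 4^N := by rw [hlc]; field_simp
          rw [h1]
          have h2 : ((4:ℝ))^N ≤ (((Finset.range l).filter (fun i => y i = true)).card : ℝ) := by
            exact_mod_cast hcard
          linarith
      · exact Filter.isBoundedUnder_of ⟨1, fun l => levD_div_le_one _ _ l⟩
    have hpos : (0:ℝ) < 1/((M:ℝ)+1) := by positivity
    linarith
  · -- all iterates stay ε-close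
    intro t
    set r := t * (s - 1) with hr
    apply Filter.limsup_le_of_le
    · exact (Filter.isBoundedUnder_of
        ⟨0, fun l => levD_div_nonneg _ _ l⟩ :
          Filter.IsBoundedUnder (· ≥ ·) Filter.atTop _).isCoboundedUnder_le
    · rw [Filter.eventually_atTop]
      refine ⟨max (M + r + 1) (⌈(4*(r:ℝ)/ε)^2⌉₊ + 1), fun l hl => ?_⟩
      have hlr : M + r + 1 ≤ l := le_trans (le_max_left _ _) hl
      have hlε : ((4*(r:ℝ)/ε)^2) ≤ l := by
        have h := le_trans (le_max_right _ _) hl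
        calc (4*(r:ℝ)/ε)^2 ≤ ⌈(4*(r:ℝ)/ε)^2⌉₊ := Nat.le_ceil _
        _ ≤ l := by exact_mod_cast le_trans (Nat.le_succ _) h
      have hl1 : 0 < l := by omega
      have hl0 : (0:ℝ) < l := by exact_mod_cast hl1
      have hrl : (r:ℝ) ≤ l := by exact_mod_cast (by omega : r ≤ l)
      have hr0 : (0:ℝ) ≤ r := by positivity
      have hH := levD_le_hamming (F^[t] (fun _ => false)) (F^[t] y) l
      set K := Nat.log 4 ((l + r) / M) with hK
      have hsubset : (Finset.range l).filter
            (fun i => F^[t] (fun _ => false) i ≠ F^[t] y i)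
          ⊆ (Finset.range (K+1)).biUnion
            (fun n => Finset.Ico (M * 4^n - r) (M * 4^n + 4^n)) := by
        intro i hi
        rw [Finset.mem_filter, Finset.mem_range] at hi
        obtain ⟨hil, hne⟩ := hi
        have hexj : ∃ j, j ≤ r ∧ (fun _ => false : ℕ → Bool) (i + j) ≠ y (i + j) := by
          by_contra hcon
          push_neg at hcon
          exact hne (ca_local F s f hf t _ _ i fun j hj => hcon j hj)
        obtain ⟨j, hjr, hjne⟩ := hexj
        have hyt : y (i + j) = true := by
          cases hyv : y (i + j)
          · exact absurd hyv.symm hjne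
          · rfl
        obtain ⟨n, hn1, hn2⟩ := (hyP _).1 hyt
        have hnK : n ≤ K := by
          have h2 : 4^n ≤ (l + r) / M := by
            rw [Nat.le_div_iff_mul_le (by omega : 0 < M)]
            have ha : M * 4^n ≤ i + j := hn1
            have : i + j < l + r := by omega
            calc 4^n * M = M * 4^n := by ring
            _ ≤ l + r := by omega
          calc n = Nat.log 4 (4^n) := (Nat.log_pow (by norm_num) n).symm
          _ ≤ K := Nat.log_mono_right h2
        rw [Finset.mem_biUnion]
        refine ⟨n, Finset.mem_range.2 (by omega), Finset.mem_Ico.2 ⟨?_, ?_⟩⟩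
        · have h1 : M * 4^n ≤ i + r := le_trans hn1 (by omega)
          omega
        · exact lt_of_le_of_lt (Nat.le_add_right i j) hn2
      have hcard : ((Finset.range l).filter
            (fun i => F^[t] (fun _ => false) i ≠ F^[t] y i)).card
          ≤ 4 * ((l + r)/M) + Nat.sqrt (l + r) * r := by
        have hKle : 4^K ≤ (l + r)/M := by
          apply Nat.pow_log_le_self
          have h1 : 1 ≤ (l + r)/M := (Nat.one_le_div_iff (by omega)).2 (by omega)
          omega
        have h4 : 4^(K+1) ≤ 4 * ((l+r)/M) := by
          rw [pow_succ]
          set d := (l + r)/M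
          set e := (4:ℕ)^K
          omega
        have hsq : K + 1 ≤ Nat.sqrt (l + r) := by
          rw [Nat.le_sqrt]
          have h2 : K + 1 ≤ 2^K := Nat.lt_two_pow_self
          calc (K+1)*(K+1) ≤ 2^K * 2^K := Nat.mul_le_mul h2 h2
          _ = 4^K := by rw [show (4:ℕ) = 2*2 from rfl, mul_pow]
          _ ≤ (l+r)/M := hKle
          _ ≤ l + r := Nat.div_le_self _ _
        calc ((Finset.range l).filter
              (fun i => F^[t] (fun _ => false) i ≠ F^[t] y i)).card
            ≤ ((Finset.range (K+1)).biUnion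
              (fun n => Finset.Ico (M * 4^n - r) (M * 4^n + 4^n))).card :=
              Finset.card_le_card hsubset
        _ ≤ ∑ n ∈ Finset.range (K+1), (Finset.Ico (M * 4^n - r) (M * 4^n + 4^n)).card :=
              Finset.card_biUnion_le
        _ ≤ ∑ n ∈ Finset.range (K+1), (4^n + r) := by
              apply Finset.sum_le_sum
              intro n _
              rw [Nat.card_Ico]
              exact sub_card_helper _ _ _
        _ = (∑ n ∈ Finset.range (K+1), 4^n) + (K+1)*r := by
              rw [Finset.sum_add_distrib, Finset.sum_const, Finset.card_range, smul_eq_mul]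
        _ ≤ 4^(K+1) + (K+1)*r := add_le_add_left (geom_sum_le (K+1)) _
        _ ≤ 4 * ((l + r)/M) + Nat.sqrt (l+r) * r :=
              add_le_add h4 (Nat.mul_le_mul_right r hsq)
      -- real-number estimates
      have hb1 : (↑(4 * ((l + r)/M)) : ℝ) / l ≤ ε/2 :=
        bound1 ε hε M l r hM16 hM0 hl0 hrl
      have hb2 : (↑(Nat.sqrt (l + r) * r) : ℝ) / l ≤ ε/2 :=
        bound2 ε hε l r hl0 hrl hlε
      -- combine
      have hHc : ((((Finset.range l).filter
            (fun i => F^[t] (fun _ => false) i ≠ F^[t] y i)).card : ℝ))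
          ≤ (↑(4 * ((l + r)/M) + Nat.sqrt (l + r) * r) : ℝ) := by exact_mod_cast hcard
      calc levD (factor (F^[t] fun _ => false) 0 l) (factor (F^[t] y) 0 l) / l
          ≤ (↑(4 * ((l + r)/M) + Nat.sqrt (l + r) * r) : ℝ) / l := by
            gcongr
            exact hH.trans hHc
      _ = (↑(4 * ((l + r)/M)) : ℝ) / l + (↑(Nat.sqrt (l + r) * r) : ℝ) / l := by
            push_cast; ring
      _ ≤ ε/2 + ε/2 := add_le_add hb1 hb2
      _ = ε := by ring
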